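/- Let (Q0, Q1, Q2, Q3, A1, A2) be a solution of system (S) on [0, T) with initial data satisfying Q_i(0) ≥ 0 for i = 0,1,2,3, A1(0) ∈ [-τ_{A1}, τ_{A1}] and A2(0) ∈ [0, τ_{A2}]. Then for all t ∈ [0, T), one has -τ_{A1} ≤ A1(t) ≤ τ_{A1} and 0 ≤ A2(t) ≤ τ_{A2}. -/

import Mathlib

/-- If `f` satisfies `f' = g` on `[t0,t1]` with `|g| ≤ L|f|` and `f t0 = 0`, then `f t1 = 0`. -/
lemma gronwall_zero (f g : ℝ → ℝ) (t0 t1 L : ℝ) (h01 : t0 ≤ t1)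
    (hd : ∀ t ∈ Set.Icc t0 t1, HasDerivAt f (g t) t)
    (hb : ∀ t ∈ Set.Icc t0 t1, |g t| ≤ L * |f t|)
    (h0 : f t0 = 0) : f t1 = 0 := by
  have H := norm_le_gronwallBound_of_norm_deriv_right_le (f := f) (f' := g)
    (δ := 0) (K := L) (ε := 0) (a := t0) (b := t1)
    (fun x hx => ((hd x hx).continuousAt.continuousWithinAt))
    (fun x hx => (hd x (Set.mem_Icc_of_Ico hx)).hasDerivWithinAt)
    (by simp [Real.norm_eq_abs, h0])
    (fun x hx => by
      simpa [Real.norm_eq_abs] using hb x (Set.mem_Icc_of_Ico hx))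
  have h2 := H t1 (Set.right_mem_Icc.2 h01)
  rw [gronwallBound_ε0] at h2
  simp [Real.norm_eq_abs] at h2
  exact h2

/-- Invariance lemma: if `F' = G·(F - b)` and `F 0 ≤ b`, then `F ≤ b` on `[0,T)`. -/
lemma invariant_le (T b : ℝ) (F G : ℝ → ℝ)
    (hd : ∀ t ∈ Set.Ico 0 T, HasDerivAt F (G t * (F t - b)) t)
    (hGc : ∀ t ∈ Set.Ico 0 T, ContinuousAt G t)
    (hi : F 0 ≤ b) : ∀ t1 ∈ Set.Ico 0 T, F t1 ≤ b := by
  intro t1 ht1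
  by_contra hlt
  push_neg at hlt
  have ht10 : (0:ℝ) ≤ t1 := ht1.1
  have hsub : Set.Icc 0 t1 ⊆ Set.Ico 0 T := fun x hx => ⟨hx.1, lt_of_le_of_lt hx.2 ht1.2⟩
  have hFc : ContinuousOn F (Set.Icc 0 t1) :=
    fun x hx => ((hd x (hsub hx)).continuousAt.continuousWithinAt)
  obtain ⟨t0, ht0mem, ht0⟩ := intermediate_value_Icc ht10 hFc ⟨hi, hlt.le⟩
  have hsub2 : Set.Icc t0 t1 ⊆ Set.Icc 0 t1 := Set.Icc_subset_Icc ht0mem.1 le_rfl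
  have hGcont : ContinuousOn G (Set.Icc t0 t1) :=
    fun x hx => (hGc x (hsub (hsub2 hx))).continuousWithinAt
  obtain ⟨C, hC⟩ := isCompact_Icc.exists_bound_of_continuousOn hGcont
  have hz : F t1 - b = 0 := by
    have := gronwall_zero (fun t => F t - b) (fun t => G t * (F t - b)) t0 t1 C ht0mem.2
      (fun t ht => (hd t (hsub (hsub2 ht))).sub_const b)
      (fun t ht => by
        rw [abs_mul]
        exact mul_le_mul_of_nonneg_right
          (by simpa [Real.norm_eq_abs] using hC t ht) (abs_nonneg _))
      (by simp [ht0])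
    simpa using this
  linarith

theorem stmt1
    (T : ℝ) (hT : 0 < T)
    (γ2 γ3 τC τA1 τA1C τA2 τA2C α1 α2 α3 αb2 αb3 : ℝ)
    (hγ2 : 0 < γ2) (hγ3 : 0 < γ3) (hτC : 0 < τC) (hτA1 : 0 < τA1)
    (hτA1C : 0 < τA1C) (hτA2 : 0 < τA2) (hτA2C : 0 < τA2C)
    (hα1 : 0 < α1) (hα2 : 0 < α2) (hα3 : 0 < α3) (hαb2 : 0 < αb2) (hαb3 : 0 < αb3)
    (f0 : ℝ → ℝ → ℝ) (f1 : ℝ → ℝ) (f2 : ℝ → ℝ → ℝ)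
    (K0 K1 K2 : NNReal)
    (hf0lip : LipschitzWith K0 (fun p : ℝ × ℝ => f0 p.1 p.2))
    (hf1lip : LipschitzWith K1 f1)
    (hf2lip : LipschitzWith K2 (fun p : ℝ × ℝ => f2 p.1 p.2))
    (m0 M0 m1 M1 m2 M2 : ℝ) (hm0 : 0 < m0) (hm1 : 0 < m1) (hm2 : 0 < m2)
    (hf0bd : ∀ x y, m0 ≤ f0 x y ∧ f0 x y ≤ M0)
    (hf1bd : ∀ x, m1 ≤ f1 x ∧ f1 x ≤ M1)
    (hf2bd : ∀ x y, m2 ≤ f2 x y ∧ f2 x y ≤ M2)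
    (Q0 Q1 Q2 Q3 A1 A2 : ℝ → ℝ)
    (hQ0' : ∀ t ∈ Set.Ico 0 T, HasDerivAt Q0 (-(f0 (Q2 t) (Q3 t)) * Q0 t) t)
    (hQ1' : ∀ t ∈ Set.Ico 0 T, HasDerivAt Q1 (f0 (Q2 t) (Q3 t) * Q0 t - f1 (A1 t) * Q1 t) t)
    (hQ2' : ∀ t ∈ Set.Ico 0 T, HasDerivAt Q2
      (γ2 * Q2 t * (1 - (Q2 t + Q3 t) / τC + A1 t / τA1C + A2 t / τA2C)
        + f1 (A1 t) * Q1 t - f2 (A1 t) (A2 t) * Q2 t) t)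
    (hQ3' : ∀ t ∈ Set.Ico 0 T, HasDerivAt Q3
      (γ3 * Q3 t * (1 - (Q2 t + Q3 t) / τC + A1 t / τA1C + A2 t / τA2C)
        + f2 (A1 t) (A2 t) * Q2 t) t)
    (hA1' : ∀ t ∈ Set.Ico 0 T, HasDerivAt A1
      ((α1 * Q1 t + α2 * Q2 t - α3 * Q3 t) * (1 + A1 t / τA1) * (1 - A1 t / τA1)) t)
    (hA2' : ∀ t ∈ Set.Ico 0 T, HasDerivAt A2
      ((αb2 * Q2 t + αb3 * Q3 t) * A2 t * (1 - A2 t / τA2)) t)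
    (hQ0i : 0 ≤ Q0 0) (hQ1i : 0 ≤ Q1 0) (hQ2i : 0 ≤ Q2 0) (hQ3i : 0 ≤ Q3 0)
    (hA1i : A1 0 ∈ Set.Icc (-τA1) τA1) (hA2i : A2 0 ∈ Set.Icc 0 τA2) :
    ∀ t ∈ Set.Ico 0 T, (-τA1 ≤ A1 t ∧ A1 t ≤ τA1) ∧ (0 ≤ A2 t ∧ A2 t ≤ τA2) := by
  have hτA1' : τA1 ≠ 0 := hτA1.ne'
  have hτA2' : τA2 ≠ 0 := hτA2.ne'
  have hcQ1 : ∀ t ∈ Set.Ico 0 T, ContinuousAt Q1 t := fun t ht => (hQ1' t ht).continuousAt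
  have hcQ2 : ∀ t ∈ Set.Ico 0 T, ContinuousAt Q2 t := fun t ht => (hQ2' t ht).continuousAt
  have hcQ3 : ∀ t ∈ Set.Ico 0 T, ContinuousAt Q3 t := fun t ht => (hQ3' t ht).continuousAt
  have hcA1 : ∀ t ∈ Set.Ico 0 T, ContinuousAt A1 t := fun t ht => (hA1' t ht).continuousAt
  have hcA2 : ∀ t ∈ Set.Ico 0 T, ContinuousAt A2 t := fun t ht => (hA2' t ht).continuousAt
  -- A1 ≤ τA1
  have hA1u : ∀ t ∈ Set.Ico 0 T, A1 t ≤ τA1 := by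
    apply invariant_le T τA1 A1
      (fun t => -((α1 * Q1 t + α2 * Q2 t - α3 * Q3 t) * (1 + A1 t / τA1) / τA1))
    · intro t ht
      have h := hA1' t ht
      convert h using 1
      field_simp
      ring
    · intro t ht
      exact (((((continuousAt_const.mul (hcQ1 t ht)).add
        (continuousAt_const.mul (hcQ2 t ht))).sub
        (continuousAt_const.mul (hcQ3 t ht))).mul
        (continuousAt_const.add ((hcA1 t ht).div_const τA1))).div_const τA1).neg
    · exact hA1i.2
  -- -τA1 ≤ A1
  have hA1l : ∀ t ∈ Set.Ico 0 T, -A1 t ≤ τA1 := by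
    apply invariant_le T τA1 (fun t => -A1 t)
      (fun t => (α1 * Q1 t + α2 * Q2 t - α3 * Q3 t) * (1 - A1 t / τA1) / τA1)
    · intro t ht
      have h := (hA1' t ht).fun_neg
      refine h.congr_deriv ?_
      field_simp
      ring
    · intro t ht
      exact ((((continuousAt_const.mul (hcQ1 t ht)).add
        (continuousAt_const.mul (hcQ2 t ht))).sub
        (continuousAt_const.mul (hcQ3 t ht))).mul
        (continuousAt_const.sub ((hcA1 t ht).div_const τA1))).div_const τA1
    · simp only [neg_le]
      exact hA1i.1
  -- A2 ≤ τA2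
  have hA2u : ∀ t ∈ Set.Ico 0 T, A2 t ≤ τA2 := by
    apply invariant_le T τA2 A2
      (fun t => -((αb2 * Q2 t + αb3 * Q3 t) * A2 t / τA2))
    · intro t ht
      have h := hA2' t ht
      convert h using 1
      field_simp
      ring
    · intro t ht
      exact ((((continuousAt_const.mul (hcQ2 t ht)).add
        (continuousAt_const.mul (hcQ3 t ht))).mul (hcA2 t ht)).div_const τA2).neg
    · exact hA2i.2
  -- 0 ≤ A2
  have hA2l : ∀ t ∈ Set.Ico 0 T, -A2 t ≤ 0 := by
    apply invariant_le T 0 (fun t => -A2 t)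
      (fun t => (αb2 * Q2 t + αb3 * Q3 t) * (1 - A2 t / τA2))
    · intro t ht
      have h := (hA2' t ht).fun_neg
      refine h.congr_deriv ?_
      ring
    · intro t ht
      exact ((continuousAt_const.mul (hcQ2 t ht)).add
        (continuousAt_const.mul (hcQ3 t ht))).mul
        (continuousAt_const.sub ((hcA2 t ht).div_const τA2))
    · simpa using hA2i.1
  intro t ht
  exact ⟨⟨by linarith [hA1l t ht], hA1u t ht⟩, ⟨by linarith [hA2l t ht], hA2u t ht⟩⟩
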